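/- arXiv:1006.0803 — 6 statements merged into one kernel-verified Lean document; each statement's English description precedes it below -/
import Mathlib

section
/- Let η_1,...,η_k : ℝ → ℝ be nonnegative continuous functions, and for a finite nonnegative measure μ define Ī_i(μ) = 1/(1 + ∫ η_i dμ). If μ₁ and μ₂ are two finite nonnegative measures supported in a closed set ω ⊆ ℝ such that for j = 1,2 the function x ↦ ∑_i Ī_i(μ_j) η_i(x) − 1 is ≤ 0 on ω and vanishes on the support of μ_j, then Ī_i(μ₁) = Ī_i(μ₂) for every i = 1,...,k. -/
open MeasureTheory

theorem stmt_2 (k : ℕ) (η : Fin k → ℝ → ℝ)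
    (hη_cont : ∀ i, Continuous (η i)) (hη_nonneg : ∀ i x, 0 ≤ η i x)
    (ω : Set ℝ) (hω : IsClosed ω)
    (μ₁ μ₂ : Measure ℝ) [IsFiniteMeasure μ₁] [IsFiniteMeasure μ₂]
    (hμ₁ω : μ₁ ωᶜ = 0) (hμ₂ω : μ₂ ωᶜ = 0)
    (hη_int₁ : ∀ i, Integrable (η i) μ₁) (hη_int₂ : ∀ i, Integrable (η i) μ₂)
    (hle₁ : ∀ x ∈ ω, ∑ i, (1 + ∫ y, η i y ∂μ₁)⁻¹ * η i x - 1 ≤ 0)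
    (hle₂ : ∀ x ∈ ω, ∑ i, (1 + ∫ y, η i y ∂μ₂)⁻¹ * η i x - 1 ≤ 0)
    (heq₁ : ∀ᵐ x ∂μ₁, ∑ i, (1 + ∫ y, η i y ∂μ₁)⁻¹ * η i x - 1 = 0)
    (heq₂ : ∀ᵐ x ∂μ₂, ∑ i, (1 + ∫ y, η i y ∂μ₂)⁻¹ * η i x - 1 = 0) :
    ∀ i, (1 + ∫ y, η i y ∂μ₁)⁻¹ = (1 + ∫ y, η i y ∂μ₂)⁻¹ := by
  set a : Fin k → ℝ := fun i => ∫ y, η i y ∂μ₁ with ha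
  set b : Fin k → ℝ := fun i => ∫ y, η i y ∂μ₂ with hb
  have ha0 : ∀ i, 0 ≤ a i := fun i => integral_nonneg (fun x => hη_nonneg i x)
  have hb0 : ∀ i, 0 ≤ b i := fun i => integral_nonneg (fun x => hη_nonneg i x)
  have hapos : ∀ i, (0:ℝ) < 1 + a i := fun i => by linarith [ha0 i]
  have hbpos : ∀ i, (0:ℝ) < 1 + b i := fun i => by linarith [hb0 i]
  have comp : ∀ (μ : Measure ℝ) [IsFiniteMeasure μ], (∀ i, Integrable (η i) μ) →
      ∀ c : Fin k → ℝ,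
      ∫ x, (∑ i, c i * η i x - 1) ∂μ = ∑ i, c i * ∫ y, η i y ∂μ - (μ Set.univ).toReal := by
    intro μ _ hint c
    have h1 : Integrable (fun x => ∑ i, c i * η i x) μ :=
      integrable_finset_sum _ (fun i _ => (hint i).const_mul _)
    rw [integral_sub h1 (integrable_const 1),
      integral_finset_sum _ (fun i _ => (hint i).const_mul _)]
    simp only [integral_const_mul, integral_const, smul_eq_mul, mul_one, measureReal_def]
  have haeω₁ : ∀ᵐ x ∂μ₁, x ∈ ω := by rw [ae_iff]; exact hμ₁ω
  have haeω₂ : ∀ᵐ x ∂μ₂, x ∈ ω := by rw [ae_iff]; exact hμ₂ω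
  have E1 : ∑ i, (1 + a i)⁻¹ * a i = (μ₁ Set.univ).toReal := by
    have h0 : ∫ x, (∑ i, (1 + a i)⁻¹ * η i x - 1) ∂μ₁ = 0 :=
      integral_eq_zero_of_ae heq₁
    have := comp μ₁ hη_int₁ (fun i => (1 + a i)⁻¹)
    rw [h0] at this; linarith
  have E2 : ∑ i, (1 + b i)⁻¹ * b i = (μ₂ Set.univ).toReal := by
    have h0 : ∫ x, (∑ i, (1 + b i)⁻¹ * η i x - 1) ∂μ₂ = 0 :=
      integral_eq_zero_of_ae heq₂
    have := comp μ₂ hη_int₂ (fun i => (1 + b i)⁻¹)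
    rw [h0] at this; linarith
  have L1 : ∑ i, (1 + a i)⁻¹ * b i ≤ (μ₂ Set.univ).toReal := by
    have h0 : ∫ x, (∑ i, (1 + a i)⁻¹ * η i x - 1) ∂μ₂ ≤ 0 :=
      integral_nonpos_of_ae (haeω₂.mono fun x hx => hle₁ x hx)
    have := comp μ₂ hη_int₂ (fun i => (1 + a i)⁻¹)
    rw [this] at h0; linarith
  have L2 : ∑ i, (1 + b i)⁻¹ * a i ≤ (μ₁ Set.univ).toReal := by
    have h0 : ∫ x, (∑ i, (1 + b i)⁻¹ * η i x - 1) ∂μ₁ ≤ 0 :=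
      integral_nonpos_of_ae (haeω₁.mono fun x hx => hle₂ x hx)
    have := comp μ₁ hη_int₁ (fun i => (1 + b i)⁻¹)
    rw [this] at h0; linarith
  set t : Fin k → ℝ := fun i => (b i - a i) * ((1 + a i)⁻¹ - (1 + b i)⁻¹) with ht
  have tform : ∀ i, t i = (b i - a i)^2 * ((1 + a i)⁻¹ * (1 + b i)⁻¹) := by
    intro i
    have h1 := (hapos i).ne'
    have h2 := (hbpos i).ne'
    simp only [ht]
    field_simp [ht]
    ring
  have tnn : ∀ i, 0 ≤ t i := fun i => by
    rw [tform i]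
    exact mul_nonneg (sq_nonneg _)
      (mul_nonneg (inv_nonneg.2 (hapos i).le) (inv_nonneg.2 (hbpos i).le))
  have tsum : ∑ i, t i ≤ 0 := by
    have h : ∑ i, t i = ∑ i, ((1 + a i)⁻¹ * b i - (1 + b i)⁻¹ * b i
        + ((1 + b i)⁻¹ * a i - (1 + a i)⁻¹ * a i)) :=
      Finset.sum_congr rfl (fun i _ => by simp only [ht]; ring)
    rw [h, Finset.sum_add_distrib, Finset.sum_sub_distrib, Finset.sum_sub_distrib]
    linarith
  have tz : ∀ i ∈ Finset.univ, t i = 0 := by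
    rw [← Finset.sum_eq_zero_iff_of_nonneg (fun i _ => tnn i)]
    exact le_antisymm tsum (Finset.sum_nonneg fun i _ => tnn i)
  intro i
  have h := tz i (Finset.mem_univ i)
  rw [tform i] at h
  have hne : (1 + a i)⁻¹ * (1 + b i)⁻¹ ≠ 0 :=
    (mul_pos (inv_pos.2 (hapos i)) (inv_pos.2 (hbpos i))).ne'
  have : (b i - a i)^2 = 0 := by
    rcases mul_eq_zero.1 h with h' | h'
    · exact h'
    · exact absurd h' hne
  have hab : b i = a i := by nlinarith [sq_nonneg (b i - a i)]
  show (1 + a i)⁻¹ = (1 + b i)⁻¹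
  rw [hab]
end

section
/- Let μ be a finite nonnegative measure minimizing L(ν) = −∑_i log(1 + ∫ η_i dν) + ν(ℝ) over nonnegative measures supported in a closed set ω, with η_i continuous nonnegative. Then for every x₀ ∈ ω one has ∑_{i=1}^k η_i(x₀)/(1 + ∫ η_i dμ) − 1 ≤ 0. -/
open MeasureTheory Real

theorem stmt_6 (k : ℕ) (η : Fin k → ℝ → ℝ)
    (hη_cont : ∀ i, Continuous (η i)) (hη_nonneg : ∀ i x, 0 ≤ η i x)
    (hη_bdd : ∀ i, ∃ M, ∀ x, η i x ≤ M)
    (ω : Set ℝ) (hω : IsClosed ω)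
    (L : Measure ℝ → ℝ)
    (hL : ∀ ν : Measure ℝ,
      L ν = -∑ i, Real.log (1 + ∫ y, η i y ∂ν) + (ν Set.univ).toReal)
    (μ : Measure ℝ) [IsFiniteMeasure μ] (hμω : μ ωᶜ = 0)
    (hmin : ∀ ν : Measure ℝ, IsFiniteMeasure ν → ν ωᶜ = 0 → L μ ≤ L ν) :
    ∀ x₀ ∈ ω, ∑ i, η i x₀ / (1 + ∫ y, η i y ∂μ) - 1 ≤ 0 := by
  intro x₀ hx₀
  set I : Fin k → ℝ := fun i => ∫ y, η i y ∂μ with hIdef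
  have hI0 : ∀ i, 0 ≤ I i := fun i => integral_nonneg (fun y => hη_nonneg i y)
  have h1I : ∀ i, 0 < 1 + I i := fun i => by linarith [hI0 i]
  have hint : ∀ (m : Measure ℝ) [IsFiniteMeasure m], ∀ i, Integrable (η i) m := by
    intro m _ i
    obtain ⟨M, hM⟩ := hη_bdd i
    exact (integrable_const M).mono' (hη_cont i).aestronglyMeasurable
      (Filter.Eventually.of_forall fun y => by
        rw [Real.norm_eq_abs, abs_of_nonneg (hη_nonneg i y)]; exact hM y)
  have key : ∀ α : ℝ, 0 < α → ∑ i, η i x₀ / (1 + I i + α * η i x₀) ≤ 1 := by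
    intro α hα
    set ν : Measure ℝ := μ + (ENNReal.ofReal α) • Measure.dirac x₀ with hν
    haveI hfin : IsFiniteMeasure ν := by
      constructor
      rw [hν]
      simp only [Measure.add_apply, Measure.smul_apply, smul_eq_mul,
        Measure.dirac_apply' _ MeasurableSet.univ, Set.indicator_univ, Pi.one_apply, mul_one]
      exact ENNReal.add_lt_top.mpr ⟨measure_lt_top μ _, ENNReal.ofReal_lt_top⟩
    have hνω : ν ωᶜ = 0 := by
      have hd0 : Measure.dirac x₀ ωᶜ = 0 := by
        rw [Measure.dirac_apply' _ hω.isOpen_compl.measurableSet,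
          Set.indicator_of_notMem (fun (h : x₀ ∈ ωᶜ) => h hx₀)]
      rw [hν]
      simp [Measure.add_apply, hμω, hd0]
    haveI : IsFiniteMeasure ((ENNReal.ofReal α) • Measure.dirac x₀) := by
      constructor
      simp only [Measure.smul_apply, smul_eq_mul,
        Measure.dirac_apply' _ MeasurableSet.univ, Set.indicator_univ, Pi.one_apply, mul_one]
      exact ENNReal.ofReal_lt_top
    have hintν : ∀ i, ∫ y, η i y ∂ν = I i + α * η i x₀ := by
      intro i
      rw [hν, integral_add_measure (hint μ i) (hint _ i), integral_smul_measure,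
        integral_dirac, ENNReal.toReal_ofReal hα.le, smul_eq_mul]
    have hmass : (ν Set.univ).toReal = (μ Set.univ).toReal + α := by
      rw [hν]
      simp only [Measure.add_apply, Measure.smul_apply, smul_eq_mul,
        Measure.dirac_apply' _ MeasurableSet.univ, Set.indicator_univ, Pi.one_apply, mul_one]
      rw [ENNReal.toReal_add (measure_ne_top μ _) ENNReal.ofReal_ne_top,
        ENNReal.toReal_ofReal hα.le]
    have hle := hmin ν hfin hνω
    rw [hL μ, hL ν] at hle
    simp only [hintν, hmass] at hle
    have hsum : ∑ i, Real.log (1 + (I i + α * η i x₀)) - ∑ i, Real.log (1 + I i) ≤ α := by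
      linarith
    have hterm : ∀ i ∈ Finset.univ, α * (η i x₀ / (1 + I i + α * η i x₀))
        ≤ Real.log (1 + (I i + α * η i x₀)) - Real.log (1 + I i) := by
      intro i _
      have hd : 0 < 1 + I i + α * η i x₀ := by
        have := mul_nonneg hα.le (hη_nonneg i x₀); linarith [h1I i]
      have hlog := Real.log_le_sub_one_of_pos
        (x := (1 + I i) / (1 + I i + α * η i x₀)) (div_pos (h1I i) hd)
      rw [Real.log_div (h1I i).ne' hd.ne'] at hlog
      have heq : (1 + I i) / (1 + I i + α * η i x₀) - 1
          = -(α * η i x₀ / (1 + I i + α * η i x₀)) := by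
        field_simp
        ring
      rw [heq] at hlog
      have heq2 : α * (η i x₀ / (1 + I i + α * η i x₀))
          = α * η i x₀ / (1 + I i + α * η i x₀) := by ring
      rw [show (1 + (I i + α * η i x₀)) = 1 + I i + α * η i x₀ by ring, heq2]
      linarith
    have hS := Finset.sum_le_sum hterm
    rw [← Finset.mul_sum, Finset.sum_sub_distrib] at hS
    have h2 : α * ∑ i, η i x₀ / (1 + I i + α * η i x₀) ≤ α * 1 := by
      rw [mul_one]; linarith
    exact le_of_mul_le_mul_left h2 hα
  have htend0 : Filter.Tendsto (fun α : ℝ => ∑ i, η i x₀ / (1 + I i + α * η i x₀))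
      (nhds 0) (nhds (∑ i, η i x₀ / (1 + I i))) := by
    apply tendsto_finset_sum
    intro i _
    have hden : Filter.Tendsto (fun α : ℝ => 1 + I i + α * η i x₀) (nhds 0)
        (nhds (1 + I i)) := by
      have hc : Continuous fun α : ℝ => 1 + I i + α * η i x₀ := by fun_prop
      simpa using hc.tendsto 0
    exact Filter.Tendsto.div tendsto_const_nhds hden (h1I i).ne'
  have htend := htend0.mono_left (nhdsWithin_le_nhds (s := Set.Ioi (0:ℝ)))
  have hfinal : ∑ i, η i x₀ / (1 + I i) ≤ 1 :=
    le_of_tendsto htend (eventually_mem_nhdsWithin.mono (fun α hα => key α hα))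
  linarith
end

section
/- Let ν(t) solve the measure-valued ODE ∂_t ν = (∑_{i=1}^k Ī_i(ν) η_i(x) − 1) ν where Ī_i(ν) = 1/(1 + ∫ η_i dν), with η_i bounded continuous nonnegative. Then along this flow the entropy L(ν) = −∑_i log(1 + ∫ η_i dν) + ν(ℝ) satisfies d/dt L(ν(t)) = −∫ (∑_i Ī_i(ν(t)) η_i(x) − 1)² dν(t) ≤ 0. -/
open MeasureTheory Real

theorem stmt_7 (k : ℕ) (η : Fin k → ℝ → ℝ)
    (hη_cont : ∀ i, Continuous (η i)) (hη_nonneg : ∀ i x, 0 ≤ η i x)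
    (hη_bdd : ∀ i, ∃ M, ∀ x, η i x ≤ M)
    (ν : ℝ → Measure ℝ) (hfin : ∀ t, IsFiniteMeasure (ν t))
    (g : ℝ → ℝ → ℝ)
    (hg : ∀ t x, g t x = ∑ i, (1 + ∫ y, η i y ∂(ν t))⁻¹ * η i x - 1)
    (t : ℝ)
    (hode_η : ∀ i, HasDerivAt (fun s => ∫ y, η i y ∂(ν s))
      (∫ x, g t x * η i x ∂(ν t)) t)
    (hode_mass : HasDerivAt (fun s => ((ν s) Set.univ).toReal)
      (∫ x, g t x ∂(ν t)) t)
    (hint : Integrable (fun x => (g t x) ^ 2) (ν t))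
    (L : Measure ℝ → ℝ)
    (hL : ∀ m : Measure ℝ,
      L m = -∑ i, Real.log (1 + ∫ y, η i y ∂m) + (m Set.univ).toReal) :
    HasDerivAt (fun s => L (ν s)) (-∫ x, (g t x) ^ 2 ∂(ν t)) t ∧
      -∫ x, (g t x) ^ 2 ∂(ν t) ≤ 0 := by
  have hfin' := hfin t
  -- positivity of 1 + ∫ η_i
  have hpos : ∀ i, (0:ℝ) < 1 + ∫ y, η i y ∂(ν t) := by
    intro i
    have : 0 ≤ ∫ y, η i y ∂(ν t) := integral_nonneg (hη_nonneg i)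
    linarith
  set c : Fin k → ℝ := fun i => (1 + ∫ y, η i y ∂(ν t))⁻¹ with hc
  have hcpos : ∀ i, 0 ≤ c i := fun i => le_of_lt (inv_pos.mpr (hpos i))
  -- integrability of η_i
  have hηint : ∀ i, Integrable (η i) (ν t) := by
    intro i
    obtain ⟨M, hM⟩ := hη_bdd i
    exact (integrable_const M).mono' (hη_cont i).aestronglyMeasurable
      (Filter.Eventually.of_forall fun x => by
        rw [Real.norm_eq_abs, abs_of_nonneg (hη_nonneg i x)]
        simpa using hM x)
  -- integrability of g t
  have hgint : Integrable (g t) (ν t) := by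
    have : Integrable (fun x => ∑ i, c i * η i x - 1) (ν t) :=
      (integrable_finset_sum _ fun i _ => (hηint i).const_mul (c i)).sub
        (integrable_const 1)
    exact this.congr (Filter.Eventually.of_forall fun x => (hg t x).symm)
  -- g t is bounded
  have hgbdd : ∃ C, ∀ x, ‖g t x‖ ≤ C := by
    choose M hM using hη_bdd
    refine ⟨∑ i, c i * M i + 1, fun x => ?_⟩
    rw [hg t x, Real.norm_eq_abs]
    have h1 : ∑ i, c i * η i x - 1 ≤ ∑ i, c i * M i + 1 := by
      have : ∑ i, c i * η i x ≤ ∑ i, c i * M i :=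
        Finset.sum_le_sum fun i _ => mul_le_mul_of_nonneg_left (hM i x) (hcpos i)
      linarith
    have h2 : -(∑ i, c i * M i + 1) ≤ ∑ i, c i * η i x - 1 := by
      have h3 : 0 ≤ ∑ i, c i * η i x :=
        Finset.sum_nonneg fun i _ => mul_nonneg (hcpos i) (hη_nonneg i x)
      have h4 : 0 ≤ ∑ i, c i * M i :=
        Finset.sum_nonneg fun i _ => mul_nonneg (hcpos i) (le_trans (hη_nonneg i x) (hM i x))
      linarith
    exact abs_le.mpr ⟨h2, h1⟩
  have hgmeas : AEStronglyMeasurable (g t) (ν t) := hgint.aestronglyMeasurable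
  -- integrability of g * η_i
  have hgηint : ∀ i, Integrable (fun x => g t x * η i x) (ν t) := by
    intro i
    obtain ⟨C, hC⟩ := hgbdd
    exact (hηint i).bdd_mul hgmeas (Filter.Eventually.of_forall hC)
  -- key identity: ∫ g² = ∑ c_i ∫ g η_i - ∫ g
  have hkey : ∫ x, (g t x) ^ 2 ∂(ν t)
      = ∑ i, c i * ∫ x, g t x * η i x ∂(ν t) - ∫ x, g t x ∂(ν t) := by
    have heq : ∀ x, (g t x) ^ 2 = ∑ i, c i * (g t x * η i x) - g t x := by
      intro x
      have := hg t x
      rw [sq]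
      nth_rewrite 2 [this]
      rw [mul_sub, mul_one, Finset.mul_sum]
      congr 1
      exact Finset.sum_congr rfl fun i _ => by ring
    rw [integral_congr_ae (Filter.Eventually.of_forall heq),
      integral_sub (integrable_finset_sum _ fun i _ => (hgηint i).const_mul (c i)) hgint,
      integral_finset_sum _ fun i _ => (hgηint i).const_mul (c i)]
    congr 1
    exact Finset.sum_congr rfl fun i _ => integral_const_mul _ _
  -- derivative of log part
  have hlog : ∀ i, HasDerivAt (fun s => Real.log (1 + ∫ y, η i y ∂(ν s)))
      ((∫ x, g t x * η i x ∂(ν t)) / (1 + ∫ y, η i y ∂(ν t))) t := by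
    intro i
    exact ((hode_η i).const_add 1).log (ne_of_gt (hpos i))
  have hsum : HasDerivAt (fun s => ∑ i, Real.log (1 + ∫ y, η i y ∂(ν s)))
      (∑ i, (∫ x, g t x * η i x ∂(ν t)) / (1 + ∫ y, η i y ∂(ν t))) t := by
    exact HasDerivAt.fun_sum fun i _ => hlog i
  have hL' : HasDerivAt (fun s => L (ν s))
      (-∑ i, (∫ x, g t x * η i x ∂(ν t)) / (1 + ∫ y, η i y ∂(ν t))
        + ∫ x, g t x ∂(ν t)) t := by
    have : (fun s => L (ν s)) = fun s =>
        -∑ i, Real.log (1 + ∫ y, η i y ∂(ν s)) + ((ν s) Set.univ).toReal := by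
      funext s; exact hL (ν s)
    rw [this]
    exact hsum.neg.add hode_mass
  have hfinal : -∑ i, (∫ x, g t x * η i x ∂(ν t)) / (1 + ∫ y, η i y ∂(ν t))
      + ∫ x, g t x ∂(ν t) = -∫ x, (g t x) ^ 2 ∂(ν t) := by
    rw [hkey]
    have : ∀ i, (∫ x, g t x * η i x ∂(ν t)) / (1 + ∫ y, η i y ∂(ν t))
        = c i * ∫ x, g t x * η i x ∂(ν t) := by
      intro i; rw [hc, div_eq_mul_inv, mul_comm]
    simp only [this]
    ring
  refine ⟨hfinal ▸ hL', ?_⟩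
  simp only [neg_nonpos]
  exact integral_nonneg fun x => sq_nonneg _
end

section
/- Let φ : ℝ → ℝ be Lipschitz with Lipschitz constant L, and suppose ∫_ℝ e^{φ(x)/ε} dx ≤ M. Then for every x ∈ ℝ, φ(x) ≤ ε log(M L / (2ε)), i.e. sup_x φ(x) ≤ ε log(1/ε) + ε log(ML/2). -/
open MeasureTheory Real
open scoped NNReal

lemma integrable_exp_neg_mul_abs' {c : ℝ} (hc : 0 < c) :
    Integrable (fun y : ℝ => Real.exp (-c * |y|)) := by
  have hIoi : IntegrableOn (fun y : ℝ => Real.exp (-c * |y|)) (Set.Ioi 0) := by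
    apply (exp_neg_integrableOn_Ioi 0 hc).congr_fun ?_ measurableSet_Ioi
    intro y hy
    simp [abs_of_pos (Set.mem_Ioi.mp hy)]
  have hIic : IntegrableOn (fun y : ℝ => Real.exp (-c * |y|)) (Set.Iic 0) := by
    rw [← Measure.map_neg_eq_self (volume : Measure ℝ)]
    have m : MeasurableEmbedding fun x : ℝ => -x := (Homeomorph.neg ℝ).measurableEmbedding
    rw [m.integrableOn_map_iff]
    simp_rw [Function.comp_def, abs_neg, Set.neg_preimage, Set.neg_Iic, neg_zero]
    exact Iff.mpr integrableOn_Ici_iff_integrableOn_Ioi hIoi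
  have : IntegrableOn (fun y : ℝ => Real.exp (-c * |y|)) (Set.Iic 0 ∪ Set.Ioi 0) :=
    hIic.union hIoi
  rwa [Set.Iic_union_Ioi, integrableOn_univ] at this

lemma integral_exp_neg_mul_abs' {c : ℝ} (hc : 0 < c) :
    ∫ y : ℝ, Real.exp (-c * |y|) = 2 / c := by
  rw [show (fun y : ℝ => Real.exp (-c * |y|)) = fun y : ℝ => (fun u => Real.exp (-u)) (c * |y|)
      by ext y; rw [neg_mul]]
  rw [integral_comp_abs (f := fun y => Real.exp (-(c * y)))]
  have := integral_comp_mul_left_Ioi (fun u => Real.exp (-u)) 0 hc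
  rw [mul_zero] at this
  rw [this, integral_exp_neg_Ioi_zero, smul_eq_mul, mul_one]
  ring

theorem stmt_9 (L : ℝ≥0) (hL : 0 < L) (φ : ℝ → ℝ) (hφ : LipschitzWith L φ)
    (ε M : ℝ) (hε : 0 < ε) (hM : 0 < M)
    (hint : Integrable (fun x => Real.exp (φ x / ε)))
    (hmass : ∫ x, Real.exp (φ x / ε) ≤ M) :
    ∀ x, φ x ≤ ε * Real.log (M * L / (2 * ε)) := by
  intro x
  have hLpos : (0:ℝ) < L := hL
  set c : ℝ := L / ε with hc
  have hcpos : 0 < c := div_pos hLpos hε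
  set K : ℝ := Real.exp (φ x / ε) with hK
  have hg : Integrable (fun y : ℝ => K * Real.exp (-c * |y - x|)) := by
    exact ((integrable_exp_neg_mul_abs' hcpos).comp_sub_right x).const_mul K
  have hmono : ∀ y : ℝ, K * Real.exp (-c * |y - x|) ≤ Real.exp (φ y / ε) := by
    intro y
    rw [hK, ← Real.exp_add]
    apply Real.exp_le_exp.mpr
    have hlip : φ x - φ y ≤ L * |y - x| := by
      have := hφ.dist_le_mul x y
      rw [Real.dist_eq, Real.dist_eq] at this
      calc φ x - φ y ≤ |φ x - φ y| := le_abs_self _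
        _ ≤ L * |x - y| := this
        _ = L * |y - x| := by rw [abs_sub_comm]
    have : φ x - L * |y - x| ≤ φ y := by linarith
    rw [div_add' _ _ _ hε.ne', div_le_div_iff₀ hε hε]
    have hnum : φ x + -c * |y - x| * ε = φ x - L * |y - x| := by
      rw [hc]
      field_simp
      ring
    nlinarith [abs_nonneg (y - x)]
  have hIle : ∫ y, K * Real.exp (-c * |y - x|) ≤ M :=
    le_trans (integral_mono hg hint hmono) hmass
  have hIeq : ∫ y, K * Real.exp (-c * |y - x|) = K * (2 / c) := by
    rw [MeasureTheory.integral_const_mul]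
    congr 1
    rw [← integral_exp_neg_mul_abs' hcpos]
    exact MeasureTheory.integral_sub_right_eq_self (fun y => Real.exp (-c * |y|)) x
  rw [hIeq] at hIle
  have hKle : K ≤ M * L / (2 * ε) := by
    rw [show (M * L / (2 * ε) : ℝ) = M / (2 / c) by rw [hc]; field_simp]
    rw [le_div_iff₀ (by positivity)]
    linarith
  have hlog : φ x / ε ≤ Real.log (M * L / (2 * ε)) := by
    rw [Real.le_log_iff_exp_le (by positivity)]
    exact hKle
  calc φ x = ε * (φ x / ε) := by field_simp
    _ ≤ ε * Real.log (M * L / (2 * ε)) := by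
        exact mul_le_mul_of_nonneg_left hlog hε.le
end

section
/- Let K be a nonnegative continuous function supported in [−ρ, ρ] with ∫ K = 1 and ∫ z K(z) dz = 0, and let φ : ℝ → ℝ be Lipschitz with ‖φ'‖_∞ ≤ L and semiconvex: φ'' ≥ −Λ (in the distributional sense). Then for every x and every ε > 0, H_ε(φ)(x) := ∫ K(z)(e^{(φ(x+εz)−φ(x))/ε} − 1) dz ≥ H(φ'(x⁺)) − Cε ≥ −Cε, where H(p) = ∫ K(z)(e^{pz}−1) dz and C depends only on Λ, ρ, L and K. -/
open MeasureTheory Real Set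
open scoped NNReal

lemma support_line_aux {f : ℝ → ℝ} {x f' : ℝ} (hfc : ConvexOn ℝ Set.univ f)
    (hf' : HasDerivWithinAt f f' (Set.Ioi x) x) (y : ℝ) :
    f x + f' * (y - x) ≤ f y := by
  rcases lt_trichotomy y x with hy | rfl | hy
  · have hs : slope f x y ≤ f' := by
      apply ge_of_tendsto ((hasDerivWithinAt_iff_tendsto_slope' (notMem_Ioi_self)).mp hf')
      filter_upwards [eventually_mem_nhdsWithin] with t ht
      have hxt : x < t := ht
      exact (hfc.slope_mono (Set.mem_univ x)) ⟨Set.mem_univ y, hy.ne⟩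
        ⟨Set.mem_univ t, hxt.ne'⟩ (by linarith)
    rw [slope_def_field] at hs
    have hyx : y - x < 0 := by linarith
    have := (div_le_iff_of_neg hyx).mp hs
    linarith
  · simp
  · have hs : f' ≤ slope f x y :=
      hfc.le_slope_of_hasDerivWithinAt_Ioi (Set.mem_univ x) (Set.mem_univ y) hy hf'
    rw [slope_def_field] at hs
    have hyx : (0:ℝ) < y - x := by linarith
    have := (le_div_iff₀ hyx).mp hs
    linarith

theorem stmt_10 (K : ℝ → ℝ) (ρ : ℝ) (hρ : 0 < ρ)
    (hK_cont : Continuous K) (hK_nonneg : ∀ z, 0 ≤ K z)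
    (hK_supp : Function.support K ⊆ Icc (-ρ) ρ)
    (hK_mass : ∫ z, K z = 1) (hK_mean : ∫ z, z * K z = 0)
    (L : ℝ≥0) (Λ : ℝ) (hΛ : 0 ≤ Λ) :
    ∃ C > 0, ∀ φ : ℝ → ℝ, LipschitzWith L φ →
      ConvexOn ℝ Set.univ (fun x => φ x + Λ / 2 * x ^ 2) →
      ∀ x d : ℝ, HasDerivWithinAt φ d (Ioi x) x →
      ∀ ε > 0,
        (∫ z, K z * (Real.exp ((φ (x + ε * z) - φ x) / ε) - 1)) ≥
          (∫ z, K z * (Real.exp (d * z) - 1)) - C * ε ∧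
        (∫ z, K z * (Real.exp ((φ (x + ε * z) - φ x) / ε) - 1)) ≥ -(C * ε) := by
  -- generic integrability helper
  have hint : ∀ g : ℝ → ℝ, Continuous g → Integrable (fun z => K z * g z) := by
    intro g hg
    refine (hK_cont.mul hg).integrable_of_hasCompactSupport ?_
    refine HasCompactSupport.intro (isCompact_Icc (a := -ρ) (b := ρ)) fun z hz => ?_
    have : K z = 0 := by
      by_contra h
      exact hz (hK_supp (Function.mem_support.mpr h))
    simp [this]
  set C0 : ℝ := Λ * ρ ^ 2 * Real.exp (L * ρ) / 2 with hC0
  have hC0_nonneg : 0 ≤ C0 := by positivity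
  refine ⟨C0 + 1, by positivity, ?_⟩
  intro φ hLip hConv x d hd ε hε
  -- bound |d| ≤ L
  have hdL : |d| ≤ (L : ℝ) := by
    have htend : Filter.Tendsto (slope φ x) (nhdsWithin x (Set.Ioi x)) (nhds d) :=
      (hasDerivWithinAt_iff_tendsto_slope' (notMem_Ioi_self)).mp hd
    have habs : Filter.Tendsto (fun t => |slope φ x t|) (nhdsWithin x (Set.Ioi x)) (nhds |d|) :=
      htend.abs
    refine le_of_tendsto habs ?_
    filter_upwards [eventually_mem_nhdsWithin] with t ht
    have hxt : x < t := ht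
    have hb : |φ t - φ x| ≤ (L : ℝ) * |t - x| := by
      have := hLip.dist_le_mul t x
      rwa [Real.dist_eq, Real.dist_eq] at this
    rw [slope_def_field, abs_div]
    rw [div_le_iff₀ (abs_pos.mpr (sub_ne_zero.mpr hxt.ne'))]
    exact hb
  -- semiconvexity support line
  have key : ∀ z : ℝ, d * z - Λ / 2 * ε * z ^ 2 ≤ (φ (x + ε * z) - φ x) / ε := by
    intro z
    have h := support_line_aux hConv
      (hd.add (((hasDerivAt_pow 2 x).const_mul (Λ / 2)).hasDerivWithinAt)) (x + ε * z)
    simp only [pow_one, Nat.cast_ofNat] at h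
    rw [le_div_iff₀ hε]
    nlinarith [h]
  -- continuity of φ
  have hφc : Continuous φ := hLip.continuous
  -- integrable functions
  have hI1 : Integrable (fun z => K z * (Real.exp ((φ (x + ε * z) - φ x) / ε) - 1)) := by
    refine hint _ ?_
    exact ((Real.continuous_exp.comp (((hφc.comp (by continuity)).sub continuous_const).div_const ε)).sub continuous_const)
  have hI2 : Integrable (fun z => K z * (Real.exp (d * z) - 1)) :=
    hint _ ((Real.continuous_exp.comp (continuous_const.mul continuous_id)).sub continuous_const)
  have hI3 : Integrable (fun z => K z * (d * z)) :=
    hint _ (continuous_const.mul continuous_id)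
  have hIK : Integrable K := by
    have := hint (fun _ => 1) continuous_const
    simpa using this
  -- pointwise bound for Step A
  have hptA : ∀ z : ℝ, K z * (Real.exp (d * z) - 1) - K z * (C0 * ε)
      ≤ K z * (Real.exp ((φ (x + ε * z) - φ x) / ε) - 1) := by
    intro z
    by_cases hz : K z = 0
    · simp [hz]
    · have hzρ : |z| ≤ ρ := by
        have := hK_supp (Function.mem_support.mpr hz)
        rw [abs_le]; exact ⟨this.1, this.2⟩
      have hKz : 0 ≤ K z := hK_nonneg z
      have hdz : d * z ≤ (L : ℝ) * ρ := by
        calc d * z ≤ |d * z| := le_abs_self _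
        _ = |d| * |z| := abs_mul d z
        _ ≤ (L : ℝ) * ρ := mul_le_mul hdL hzρ (abs_nonneg z) L.2
      have hexp_le : Real.exp (d * z) ≤ Real.exp ((L : ℝ) * ρ) := Real.exp_le_exp.mpr hdz
      have hb : (0:ℝ) ≤ Λ / 2 * ε * z ^ 2 := by positivity
      have h1 : Real.exp (d * z - Λ / 2 * ε * z ^ 2)
          ≤ Real.exp ((φ (x + ε * z) - φ x) / ε) := Real.exp_le_exp.mpr (key z)
      have h2 : Real.exp (d * z) * (1 - Λ / 2 * ε * z ^ 2)
          ≤ Real.exp (d * z - Λ / 2 * ε * z ^ 2) := by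
        rw [show d * z - Λ / 2 * ε * z ^ 2 = d * z + -(Λ / 2 * ε * z ^ 2) by ring,
          Real.exp_add]
        have : 1 - Λ / 2 * ε * z ^ 2 ≤ Real.exp (-(Λ / 2 * ε * z ^ 2)) := by
          linarith [Real.add_one_le_exp (-(Λ / 2 * ε * z ^ 2))]
        exact mul_le_mul_of_nonneg_left this (Real.exp_nonneg _)
      have h3 : Λ / 2 * ε * z ^ 2 * Real.exp (d * z) ≤ C0 * ε := by
        rw [hC0]
        have hz2 : z ^ 2 ≤ ρ ^ 2 := by
          rw [← sq_abs z]
          exact pow_le_pow_left₀ (abs_nonneg z) hzρ 2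
        have h4 : Λ / 2 * ε * z ^ 2 * Real.exp (d * z)
            ≤ Λ / 2 * ε * ρ ^ 2 * Real.exp ((L : ℝ) * ρ) := by
          have e1 : Λ / 2 * ε * z ^ 2 ≤ Λ / 2 * ε * ρ ^ 2 :=
            mul_le_mul_of_nonneg_left hz2 (by positivity)
          exact mul_le_mul e1 hexp_le (Real.exp_nonneg _) (by positivity)
        calc Λ / 2 * ε * z ^ 2 * Real.exp (d * z)
            ≤ Λ / 2 * ε * ρ ^ 2 * Real.exp ((L : ℝ) * ρ) := h4
          _ = Λ * ρ ^ 2 * Real.exp ((L : ℝ) * ρ) / 2 * ε := by ring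
      have hmain : Real.exp (d * z) - 1 - C0 * ε
          ≤ Real.exp ((φ (x + ε * z) - φ x) / ε) - 1 := by
        nlinarith [h1, h2, h3]
      nlinarith [mul_le_mul_of_nonneg_left hmain hKz]
  -- Step A integral inequality
  have hA : (∫ z, K z * (Real.exp (d * z) - 1)) - C0 * ε
      ≤ ∫ z, K z * (Real.exp ((φ (x + ε * z) - φ x) / ε) - 1) := by
    have hsub : Integrable (fun z => K z * (Real.exp (d * z) - 1) - K z * (C0 * ε)) :=
      hI2.sub (hIK.mul_const _)
    have := integral_mono hsub hI1 hptA
    rwa [integral_sub hI2 (hIK.mul_const _), integral_mul_const, hK_mass, one_mul] at this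
  -- Step B : ∫ I2 ≥ 0
  have hB : (0:ℝ) ≤ ∫ z, K z * (Real.exp (d * z) - 1) := by
    have hpt : ∀ z : ℝ, K z * (d * z) ≤ K z * (Real.exp (d * z) - 1) := by
      intro z
      apply mul_le_mul_of_nonneg_left _ (hK_nonneg z)
      linarith [Real.add_one_le_exp (d * z)]
    have h0 : (∫ z, K z * (d * z)) = 0 := by
      have : (fun z => K z * (d * z)) = fun z => d * (z * K z) := by
        funext z; ring
      rw [this, integral_const_mul, hK_mean, mul_zero]
    have := integral_mono hI3 hI2 hpt
    rwa [h0] at this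
  constructor
  · have : (∫ z, K z * (Real.exp (d * z) - 1)) - (C0 + 1) * ε
        ≤ (∫ z, K z * (Real.exp (d * z) - 1)) - C0 * ε := by nlinarith
    linarith
  · have : -((C0 + 1) * ε) ≤ 0 - C0 * ε := by nlinarith
    linarith
end

section
/- Let φ_ε be uniformly Lipschitz in x on [0,T]×ℝ with ‖∂_x φ_ε‖_∞ ≤ L, and suppose ∂_x φ_ε → ∂_x φ in L^p_loc([0,T]×ℝ) for some p ∈ [1,∞) and a.e. Then for K continuous, nonnegative and compactly supported, H_ε(φ_ε)(t,x) = ∫ K(z)(exp(∫₀¹ z ∂_x φ_ε(t, x+εzθ)dθ) − 1) dz converges to H(∂_x φ)(t,x) = ∫ K(z)(e^{z ∂_x φ(t,x)} − 1) dz in L¹_loc([0,T]×ℝ) as ε → 0. -/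
open MeasureTheory Real Set intervalIntegral
open scoped NNReal
open scoped ENNReal

section Aux

lemma aux_II {f : ℝ → ℝ} (hm : Measurable f) {c : ℝ} (hb : ∀ θ, |f θ| ≤ c) :
    IntervalIntegrable f volume 0 1 := by
  rw [intervalIntegrable_iff]
  refine Integrable.mono' (g := fun _ => c) (integrableOn_const ?_)
    hm.aestronglyMeasurable (Filter.Eventually.of_forall fun θ => by
      simpa [Real.norm_eq_abs] using hb θ)
  rw [Set.uIoc_of_le zero_le_one, Real.volume_Ioc]
  simp

lemma aux_exp_lip' {a b c : ℝ} (hba : b ≤ a) (hac : a ≤ c) :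
    |Real.exp a - Real.exp b| ≤ Real.exp c * |a - b| := by
  have h1 : Real.exp a * ((b - a) + 1) ≤ Real.exp a * Real.exp (b - a) := by
    have := Real.add_one_le_exp (b - a)
    nlinarith [Real.exp_pos a]
  rw [← Real.exp_add] at h1
  have h2 : a + (b - a) = b := by ring
  rw [h2] at h1
  have h3 : Real.exp a - Real.exp b ≤ Real.exp a * (a - b) := by nlinarith
  have h4 : Real.exp b ≤ Real.exp a := Real.exp_le_exp.2 hba
  rw [abs_of_nonneg (by linarith), abs_of_nonneg (by linarith)]
  calc Real.exp a - Real.exp b ≤ Real.exp a * (a - b) := h3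
    _ ≤ Real.exp c * (a - b) := by
        have := Real.exp_le_exp.2 hac
        nlinarith [Real.exp_pos a, sub_nonneg.2 hba]

lemma aux_exp_lip {a b c : ℝ} (ha : |a| ≤ c) (hb : |b| ≤ c) :
    |Real.exp a - Real.exp b| ≤ Real.exp c * |a - b| := by
  rcases le_total b a with h | h
  · exact aux_exp_lip' h (le_trans (le_abs_self a) ha)
  · rw [abs_sub_comm, abs_sub_comm a b]
    exact aux_exp_lip' h (le_trans (le_abs_self b) hb)

lemma aux_rpow_split {u η p : ℝ} (hη : 0 < η) (hp : 1 ≤ p) (hu : 0 ≤ u) :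
    u ≤ η + η ^ (1 - p) * u ^ p := by
  rcases le_or_gt u η with h | h
  · have : 0 ≤ η ^ (1 - p) * u ^ p :=
      mul_nonneg (Real.rpow_nonneg hη.le _) (Real.rpow_nonneg hu _)
    linarith
  · have hu0 : 0 < u := lt_trans hη h
    have h1 : u = u ^ p * u ^ (1 - p) := by
      rw [← Real.rpow_add hu0]; norm_num
    have h2 : u ^ (1 - p) ≤ η ^ (1 - p) :=
      Real.rpow_le_rpow_of_nonpos hη h.le (by linarith)
    have h3 : u ^ p * u ^ (1 - p) ≤ u ^ p * η ^ (1 - p) :=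
      mul_le_mul_of_nonneg_left h2 (Real.rpow_nonneg hu0.le _)
    nlinarith [Real.rpow_nonneg hu0.le p, Real.rpow_nonneg hη.le (1-p)]

end Aux
lemma aux_translation (g : ℝ → ℝ → ℝ) (hg : Measurable (Function.uncurry g))
    (L : ℝ) (hb : ∀ t x, |g t x| ≤ L) (a b c d : ℝ) {η : ℝ} (hη : 0 < η) :
    ∃ δ : ℝ, 0 < δ ∧ δ ≤ 1 ∧ ∀ h : ℝ, |h| ≤ δ →
      ∫⁻ q in Icc a b ×ˢ Icc c d, ENNReal.ofReal |g q.1 (q.2 + h) - g q.1 q.2|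
        ≤ ENNReal.ofReal η := by
  set W : Set (ℝ × ℝ) := Icc a b ×ˢ Icc (c-1) (d+1) with hWdef
  have hWm : MeasurableSet W := (measurableSet_Icc).prod measurableSet_Icc
  have hf0 : Measurable (fun q : ℝ × ℝ => g q.1 q.2) := hg
  set G : ℝ × ℝ → ℝ := W.indicator (fun q => g q.1 q.2) with hGdef
  have hGm : Measurable G := hf0.indicator hWm
  have hWfin : volume W < ⊤ := by
    rw [hWdef, Measure.volume_eq_prod, Measure.prod_prod]
    exact ENNReal.mul_lt_top (by simp [Real.volume_Icc]) (by simp [Real.volume_Icc])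
  have hGint : Integrable G volume := by
    rw [hGdef, integrable_indicator_iff hWm]
    exact Integrable.mono' (MeasureTheory.integrableOn_const hWfin.ne)
      hf0.aestronglyMeasurable (Filter.Eventually.of_forall fun q => by
        simpa [Real.norm_eq_abs] using hb q.1 q.2)
  obtain ⟨φ, hφsupp, hφapprox, hφcont, hφint⟩ :=
    hGint.exists_hasCompactSupport_lintegral_sub_le
      (ε := ENNReal.ofReal (η/3)) ((ENNReal.ofReal_pos.2 (by positivity)).ne')
  have hφu : UniformContinuous φ := hφsupp.uniformContinuous_of_continuous hφcont
  obtain ⟨ρ, hρ⟩ := hφsupp.isBounded.subset_closedBall (0 : ℝ × ℝ)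
  set M : ℝ := (volume (Metric.closedBall (0:ℝ×ℝ) (ρ+1))).toReal + 1 with hMdef
  have hMpos : 0 < M := by positivity
  obtain ⟨δ₂, hδ₂pos, hδ₂⟩ := Metric.uniformContinuous_iff.1 hφu (η/(3*M)) (by positivity)
  refine ⟨min 1 (δ₂/2), by positivity, min_le_left _ _, fun h hh => ?_⟩
  set v : ℝ × ℝ := (0, h) with hvdef
  have hh1 : |h| ≤ 1 := le_trans hh (min_le_left _ _)
  have hhδ : |h| < δ₂ := lt_of_le_of_lt (le_trans hh (min_le_right _ _)) (by linarith)
  have hnv : ‖v‖ = |h| := by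
    rw [hvdef, Prod.norm_def]; simp [Real.norm_eq_abs]
  -- step A: replace by G on Q
  have hQm : MeasurableSet (Icc a b ×ˢ Icc c d : Set (ℝ×ℝ)) :=
    measurableSet_Icc.prod measurableSet_Icc
  have stepA : ∫⁻ q in Icc a b ×ˢ Icc c d, ENNReal.ofReal |g q.1 (q.2 + h) - g q.1 q.2|
      = ∫⁻ q in Icc a b ×ˢ Icc c d, ENNReal.ofReal |G (q + v) - G q| := by
    refine setLIntegral_congr_fun hQm (fun q hq => ?_)
    have hq1 : q ∈ W := by
      rw [hWdef]; constructor
      · exact hq.1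
      · exact ⟨by linarith [hq.2.1], by linarith [hq.2.2]⟩
    have hq2 : q + v ∈ W := by
      rw [hWdef]; constructor
      · simpa [hvdef] using hq.1
      · have h1 := hq.2.1; have h2 := hq.2.2
        have hha := abs_le.1 hh1
        simp only [hvdef, Prod.snd_add]
        exact ⟨by linarith, by linarith⟩
    rw [hGdef]
    rw [Set.indicator_of_mem hq1, Set.indicator_of_mem hq2]
    simp [hvdef]
  rw [stepA]
  -- step B : extend to whole space
  have stepB : ∫⁻ q in Icc a b ×ˢ Icc c d, ENNReal.ofReal |G (q + v) - G q|
      ≤ ∫⁻ q, ENNReal.ofReal |G (q + v) - G q| := setLIntegral_le_lintegral _ _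
  refine le_trans stepB ?_
  -- now bound the full-space integral
  have hmeas1 : Measurable fun q : ℝ×ℝ => ENNReal.ofReal |G (q + v) - φ (q + v)| := by
    apply Measurable.ennreal_ofReal
    exact ((hGm.sub hφcont.measurable).comp (measurable_add_const v)).abs
  have hmeas2 : Measurable fun q : ℝ×ℝ => ENNReal.ofReal |φ (q + v) - φ q| := by
    apply Measurable.ennreal_ofReal
    exact ((hφcont.measurable.comp (measurable_add_const v)).sub hφcont.measurable).abs
  have tri : ∀ q : ℝ×ℝ, ENNReal.ofReal |G (q + v) - G q|
      ≤ ENNReal.ofReal |G (q + v) - φ (q + v)| + ENNReal.ofReal |φ (q + v) - φ q|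
        + ENNReal.ofReal |φ q - G q| := by
    intro q
    have h1 : |G (q + v) - G q| ≤ |G (q+v) - φ (q+v)| + |φ (q+v) - φ q| + |φ q - G q| := by
      have := abs_sub_le (G (q+v)) (φ (q+v)) (G q)
      have := abs_sub_le (φ (q+v)) (φ q) (G q)
      calc |G (q + v) - G q| ≤ |G (q+v) - φ (q+v)| + |φ (q+v) - G q| := abs_sub_le _ _ _
        _ ≤ |G (q+v) - φ (q+v)| + (|φ (q+v) - φ q| + |φ q - G q|) := by
            linarith [abs_sub_le (φ (q+v)) (φ q) (G q)]
        _ = _ := by ring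
    calc ENNReal.ofReal |G (q + v) - G q|
        ≤ ENNReal.ofReal (|G (q+v) - φ (q+v)| + |φ (q+v) - φ q| + |φ q - G q|) :=
          ENNReal.ofReal_le_ofReal h1
      _ ≤ _ := by
          rw [ENNReal.ofReal_add (by positivity) (abs_nonneg _),
            ENNReal.ofReal_add (by positivity) (abs_nonneg _)]
  have split : ∫⁻ q, ENNReal.ofReal |G (q + v) - G q|
      ≤ (∫⁻ q, ENNReal.ofReal |G (q + v) - φ (q + v)|)
        + (∫⁻ q, ENNReal.ofReal |φ (q + v) - φ q|)
        + (∫⁻ q, ENNReal.ofReal |φ q - G q|) := by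
    calc ∫⁻ q, ENNReal.ofReal |G (q + v) - G q|
        ≤ ∫⁻ q, (ENNReal.ofReal |G (q + v) - φ (q + v)| + ENNReal.ofReal |φ (q + v) - φ q|
            + ENNReal.ofReal |φ q - G q|) := lintegral_mono tri
      _ = _ := by
          rw [lintegral_add_left (f := fun q => ENNReal.ofReal |G (q + v) - φ (q + v)| + ENNReal.ofReal |φ (q + v) - φ q|) (hmeas1.add hmeas2), lintegral_add_left hmeas1]
  -- term 1
  have hT1 : ∫⁻ q, ENNReal.ofReal |G (q + v) - φ (q + v)| ≤ ENNReal.ofReal (η/3) := by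
    have : ∫⁻ q, ENNReal.ofReal |G (q + v) - φ (q + v)|
        = ∫⁻ q, ENNReal.ofReal |G q - φ q| :=
      lintegral_add_right_eq_self (fun q => ENNReal.ofReal |G q - φ q|) v
    rw [this]
    refine le_trans (le_of_eq ?_) hφapprox
    congr 1; ext q
    rw [← Real.norm_eq_abs, ofReal_norm_eq_enorm]
  -- term 3
  have hT3 : ∫⁻ q, ENNReal.ofReal |φ q - G q| ≤ ENNReal.ofReal (η/3) := by
    refine le_trans (le_of_eq ?_) hφapprox
    congr 1; ext q
    rw [abs_sub_comm, ← Real.norm_eq_abs, ofReal_norm_eq_enorm]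
  -- term 2
  have hT2 : ∫⁻ q, ENNReal.ofReal |φ (q + v) - φ q| ≤ ENNReal.ofReal (η/3) := by
    have hptwise : ∀ q : ℝ×ℝ, ENNReal.ofReal |φ (q + v) - φ q|
        ≤ (Metric.closedBall (0:ℝ×ℝ) (ρ+1)).indicator (fun _ => ENNReal.ofReal (η/(3*M))) q := by
      intro q
      by_cases hq : q ∈ Metric.closedBall (0:ℝ×ℝ) (ρ+1)
      · rw [Set.indicator_of_mem hq]
        apply ENNReal.ofReal_le_ofReal
        have hd : dist (q + v) q < δ₂ := by
          rw [dist_eq_norm, add_sub_cancel_left, hnv]; exact hhδ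
        have := hδ₂ hd
        rw [Real.dist_eq] at this
        exact this.le
      · rw [Set.indicator_of_notMem hq]
        have hq' : ρ + 1 < ‖q‖ := by
          simpa [Metric.mem_closedBall, dist_zero_right, not_le] using hq
        have hφq : φ q = 0 := by
          apply image_eq_zero_of_notMem_tsupport
          intro hmem
          have := hρ hmem
          rw [Metric.mem_closedBall, dist_zero_right] at this
          linarith
        have hφqv : φ (q + v) = 0 := by
          apply image_eq_zero_of_notMem_tsupport
          intro hmem
          have h1 := hρ hmem
          rw [Metric.mem_closedBall, dist_zero_right] at h1
          have : ‖q‖ ≤ ‖q + v‖ + ‖v‖ := by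
            calc ‖q‖ = ‖(q + v) + (-v)‖ := by ring_nf
              _ ≤ ‖q + v‖ + ‖-v‖ := norm_add_le _ _
              _ = ‖q + v‖ + ‖v‖ := by rw [norm_neg]
          rw [hnv] at this
          linarith
        simp [hφq, hφqv]
    calc ∫⁻ q, ENNReal.ofReal |φ (q + v) - φ q|
        ≤ ∫⁻ q, (Metric.closedBall (0:ℝ×ℝ) (ρ+1)).indicator
            (fun _ => ENNReal.ofReal (η/(3*M))) q := lintegral_mono hptwise
      _ = ENNReal.ofReal (η/(3*M)) * volume (Metric.closedBall (0:ℝ×ℝ) (ρ+1)) := by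
          rw [lintegral_indicator measurableSet_closedBall, setLIntegral_const]
      _ ≤ ENNReal.ofReal (η/3) := by
          have hfin : volume (Metric.closedBall (0:ℝ×ℝ) (ρ+1)) ≠ ⊤ :=
            (isCompact_closedBall _ _).measure_lt_top.ne
          rw [← ENNReal.ofReal_toReal hfin, ← ENNReal.ofReal_mul (by positivity)]
          apply ENNReal.ofReal_le_ofReal
          have htR : (volume (Metric.closedBall (0:ℝ×ℝ) (ρ+1))).toReal ≤ M := by
            rw [hMdef]; linarith
          have h0 : 0 ≤ (volume (Metric.closedBall (0:ℝ×ℝ) (ρ+1))).toReal :=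
            ENNReal.toReal_nonneg
          rw [div_mul_eq_mul_div, div_le_div_iff₀ (by positivity) (by positivity)]
          nlinarith
  refine le_trans split ?_
  calc (∫⁻ q, ENNReal.ofReal |G (q + v) - φ (q + v)|)
        + (∫⁻ q, ENNReal.ofReal |φ (q + v) - φ q|)
        + (∫⁻ q, ENNReal.ofReal |φ q - G q|)
      ≤ ENNReal.ofReal (η/3) + ENNReal.ofReal (η/3) + ENNReal.ofReal (η/3) :=
        add_le_add (add_le_add hT1 hT2) hT3
    _ = ENNReal.ofReal η := by
        rw [← ENNReal.ofReal_add (by positivity) (by positivity),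
          ← ENNReal.ofReal_add (by positivity) (by positivity)]
        congr 1; ring

set_option maxHeartbeats 1000000 in
theorem stmt_19 (T : ℝ) (hT : 0 < T) (L : ℝ≥0)
    (K : ℝ → ℝ) (hK_cont : Continuous K) (hK_nonneg : ∀ z, 0 ≤ K z)
    (hK_supp : HasCompactSupport K)
    (εn : ℕ → ℝ) (hεn_pos : ∀ n, 0 < εn n)
    (hεn : Filter.Tendsto εn Filter.atTop (nhds 0))
    (gε : ℕ → ℝ → ℝ → ℝ) (g : ℝ → ℝ → ℝ)
    (hgε_meas : ∀ n, Measurable (Function.uncurry (gε n)))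
    (hg_meas : Measurable (Function.uncurry g))
    (hgε_bdd : ∀ n t x, |gε n t x| ≤ L) (hg_bdd : ∀ t x, |g t x| ≤ L)
    (p : ℝ) (hp : 1 ≤ p)
    (hLp : ∀ a b c d : ℝ, Filter.Tendsto
      (fun n => ∫ q in Icc a b ×ˢ Icc c d, |gε n q.1 q.2 - g q.1 q.2| ^ p
        ∂(volume : Measure (ℝ × ℝ)))
      Filter.atTop (nhds 0))
    (hae : ∀ᵐ q ∂(volume : Measure (ℝ × ℝ)),
      Filter.Tendsto (fun n => gε n q.1 q.2) Filter.atTop (nhds (g q.1 q.2))) :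
    ∀ a b c d : ℝ, Filter.Tendsto
      (fun n => ∫ q in Icc a b ×ˢ Icc c d,
        |(∫ z, K z * (Real.exp (∫ θ in (0:ℝ)..1, z * gε n q.1 (q.2 + εn n * z * θ)) - 1))
          - (∫ z, K z * (Real.exp (z * g q.1 q.2) - 1))|
        ∂(volume : Measure (ℝ × ℝ)))
      Filter.atTop (nhds 0) := by
  intro a b c d
  set Lr : ℝ := (L : ℝ) with hLrdef
  have hLr0 : 0 ≤ Lr := L.coe_nonneg
  set Q : Set (ℝ × ℝ) := Icc a b ×ˢ Icc c d with hQdef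
  have hQm : MeasurableSet Q := measurableSet_Icc.prod measurableSet_Icc
  obtain ⟨R₀, hR₀⟩ := hK_supp.isBounded.subset_closedBall (0 : ℝ)
  set R : ℝ := max R₀ 1 with hRdef
  have hR1 : 1 ≤ R := le_max_right _ _
  have hRpos : 0 < R := lt_of_lt_of_le one_pos hR1
  have hKR : ∀ z : ℝ, K z ≠ 0 → |z| ≤ R := by
    intro z hz
    have h1 : z ∈ tsupport K := subset_tsupport K hz
    have h2 := hR₀ h1
    rw [Metric.mem_closedBall, Real.dist_eq, sub_zero] at h2
    exact le_trans h2 (le_max_left _ _)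
  set C₀ : ℝ := Real.exp (R * Lr) * R with hC₀def
  have hC₀0 : 0 < C₀ := mul_pos (Real.exp_pos _) hRpos
  set Fn : ℕ → ℝ × ℝ → ℝ := fun n q =>
    |(∫ z, K z * (Real.exp (∫ θ in (0:ℝ)..1, z * gε n q.1 (q.2 + εn n * z * θ)) - 1))
      - (∫ z, K z * (Real.exp (z * g q.1 q.2) - 1))| with hFndef
  set Φ : ℕ → ℝ≥0∞ := fun n => ∫⁻ q in Q, ENNReal.ofReal (Fn n q) with hΦdef
  suffices hΦ0 : Filter.Tendsto Φ Filter.atTop (nhds 0) by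
    have hle : ∀ n, (∫ q in Q, Fn n q) ≤ (Φ n).toReal := by
      intro n
      by_cases hInt : Integrable (Fn n) (volume.restrict Q)
      · rw [integral_eq_lintegral_of_nonneg_ae
          (Filter.Eventually.of_forall fun q => abs_nonneg _) hInt.1]
      · rw [integral_undef hInt]; exact ENNReal.toReal_nonneg
    have htR : Filter.Tendsto (fun n => (Φ n).toReal) Filter.atTop (nhds 0) := by
      have := (ENNReal.tendsto_toReal (a := 0) (by simp)).comp hΦ0
      simpa [Function.comp_def] using this
    exact squeeze_zero (fun n => integral_nonneg fun q => abs_nonneg _) hle htR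
  -- basic integrability of K
  have hKint : Integrable K volume := hK_cont.integrable_of_hasCompactSupport hK_supp
  set κ : ℝ := ∫ z, K z with hκdef
  have hκ0 : 0 ≤ κ := integral_nonneg hK_nonneg
  -- enlarged rectangle
  set Q' : Set (ℝ × ℝ) := Icc a b ×ˢ Icc (c-1) (d+1) with hQ'def
  have hQ'm : MeasurableSet Q' := measurableSet_Icc.prod measurableSet_Icc
  have hQ'fin : volume Q' < ⊤ := by
    rw [hQ'def, Measure.volume_eq_prod, Measure.prod_prod]
    exact ENNReal.mul_lt_top (by simp [Real.volume_Icc]) (by simp [Real.volume_Icc])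
  -- the L^p error function
  set u : ℕ → ℝ × ℝ → ℝ := fun n q => gε n q.1 q.2 - g q.1 q.2 with hudef
  have hu_meas : ∀ n, Measurable (u n) := fun n => (hgε_meas n).sub hg_meas
  have hu_bdd : ∀ n q, |u n q| ≤ 2 * Lr := by
    intro n q
    have h1 := hgε_bdd n q.1 q.2
    have h2 := hg_bdd q.1 q.2
    rw [hudef]
    calc |gε n q.1 q.2 - g q.1 q.2| ≤ |gε n q.1 q.2| + |g q.1 q.2| := abs_sub _ _
      _ ≤ 2 * Lr := by rw [hLrdef]; linarith
  set Δ : ℕ → ℝ≥0∞ := fun n => ∫⁻ q in Q', ENNReal.ofReal |u n q| with hΔdef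
  have hΔ_top : ∀ n, Δ n ≠ ⊤ := by
    intro n
    have : Δ n ≤ ENNReal.ofReal (2*Lr) * volume Q' := by
      rw [hΔdef]
      calc ∫⁻ q in Q', ENNReal.ofReal |u n q|
          ≤ ∫⁻ _ in Q', ENNReal.ofReal (2*Lr) :=
            lintegral_mono fun q => ENNReal.ofReal_le_ofReal (hu_bdd n q)
        _ = ENNReal.ofReal (2*Lr) * volume Q' := setLIntegral_const _ _
    exact ne_top_of_le_ne_top (ENNReal.mul_ne_top ENNReal.ofReal_ne_top hQ'fin.ne) this
  -- joint measurability of the shifted functions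
  have hshift_meas : ∀ n, Measurable fun w : (ℝ × ℝ) × ℝ × ℝ =>
      gε n w.1.1 (w.1.2 + εn n * w.2.1 * w.2.2) := by
    intro n
    exact (hgε_meas n).comp ((measurable_fst.fst).prodMk
      ((measurable_fst.snd).add (((measurable_snd.fst).const_mul (εn n)).mul measurable_snd.snd)))
  -- STEP 1 : pointwise estimate
  set D : ℕ → ℝ × ℝ → ℝ → ℝ := fun n q z =>
    ∫ θ in (0:ℝ)..1, |gε n q.1 (q.2 + εn n * z * θ) - g q.1 q.2| with hDdef
  have hθ_meas : ∀ (n : ℕ) (q : ℝ × ℝ), Measurable fun zθ : ℝ × ℝ => gε n q.1 (q.2 + εn n * zθ.1 * zθ.2) := by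
    intro n q
    exact (hgε_meas n).comp (measurable_const.prodMk
      (measurable_const.add ((measurable_fst.const_mul (εn n)).mul measurable_snd)))
  have hD_meas : ∀ (n : ℕ) (q : ℝ × ℝ), Measurable (D n q) := by
    intro n q
    have h1 : Measurable fun zθ : ℝ × ℝ => |gε n q.1 (q.2 + εn n * zθ.1 * zθ.2) - g q.1 q.2| :=
      ((hθ_meas n q).sub measurable_const).abs
    have h2 := (h1.stronglyMeasurable.integral_prod_right'
      (ν := volume.restrict (Ioc (0:ℝ) 1))).measurable
    have : D n q = fun z => ∫ θ in Ioc (0:ℝ) 1,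
        |gε n q.1 (q.2 + εn n * z * θ) - g q.1 q.2| := by
      funext z
      rw [hDdef]
      exact intervalIntegral.integral_of_le zero_le_one
    rw [this]
    exact h2
  have hD_nonneg : ∀ (n : ℕ) (q : ℝ × ℝ) (z : ℝ), 0 ≤ D n q z := by
    intro n q z
    exact intervalIntegral.integral_nonneg zero_le_one fun θ _ => abs_nonneg _
  have hD_bdd : ∀ (n : ℕ) (q : ℝ × ℝ) (z : ℝ), D n q z ≤ 2 * Lr := by
    intro n q z
    have h1 : ∀ θ ∈ Set.uIoc (0:ℝ) 1,
        ‖|gε n q.1 (q.2 + εn n * z * θ) - g q.1 q.2|‖ ≤ 2 * Lr := by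
      intro θ _
      rw [Real.norm_eq_abs, abs_abs]
      have := hgε_bdd n q.1 (q.2 + εn n * z * θ)
      have := hg_bdd q.1 q.2
      calc |gε n q.1 (q.2 + εn n * z * θ) - g q.1 q.2|
          ≤ |gε n q.1 (q.2 + εn n * z * θ)| + |g q.1 q.2| := abs_sub _ _
        _ ≤ 2 * Lr := by rw [hLrdef]; linarith
    have h2 := intervalIntegral.norm_integral_le_of_norm_le_const h1
    rw [Real.norm_eq_abs] at h2
    simp only [sub_zero, abs_one, mul_one] at h2
    exact le_trans (le_abs_self _) h2
  have hDint : ∀ (n : ℕ) (q : ℝ × ℝ) (z : ℝ), IntervalIntegrable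
      (fun θ => |gε n q.1 (q.2 + εn n * z * θ) - g q.1 q.2|) volume 0 1 := by
    intro n q z
    refine aux_II ?_ (c := 2 * Lr) ?_
    · exact (((hθ_meas n q).comp (measurable_const.prodMk measurable_id)).sub
        measurable_const).abs
    · intro θ
      rw [abs_abs]
      have h1 := hgε_bdd n q.1 (q.2 + εn n * z * θ)
      have h2 := hg_bdd q.1 q.2
      calc |gε n q.1 (q.2 + εn n * z * θ) - g q.1 q.2|
          ≤ |gε n q.1 (q.2 + εn n * z * θ)| + |g q.1 q.2| := abs_sub _ _
        _ ≤ 2 * Lr := by linarith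
  -- STEP 1 : pointwise estimate
  have hpoint : ∀ (n : ℕ) (q : ℝ × ℝ), Fn n q ≤ C₀ * ∫ z, K z * D n q z := by
    intro n q
    set an : ℝ → ℝ := fun z => ∫ θ in (0:ℝ)..1, z * gε n q.1 (q.2 + εn n * z * θ) with handef
    set A : ℝ → ℝ := fun z => K z * (Real.exp (an z) - 1) with hAdef
    set B : ℝ → ℝ := fun z => K z * (Real.exp (z * g q.1 q.2) - 1) with hBdef
    have han_meas : Measurable an := by
      have h1 : Measurable fun zθ : ℝ × ℝ => zθ.1 * gε n q.1 (q.2 + εn n * zθ.1 * zθ.2) :=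
        measurable_fst.mul (hθ_meas n q)
      have h2 := (h1.stronglyMeasurable.integral_prod_right'
        (ν := volume.restrict (Ioc (0:ℝ) 1))).measurable
      have h3 : an = fun z => ∫ θ in Ioc (0:ℝ) 1, z * gε n q.1 (q.2 + εn n * z * θ) := by
        funext z; rw [handef]; exact intervalIntegral.integral_of_le zero_le_one
      rw [h3]; exact h2
    have hint_an : ∀ z : ℝ, IntervalIntegrable
        (fun θ => z * gε n q.1 (q.2 + εn n * z * θ)) volume 0 1 := by
      intro z
      refine aux_II ?_ (c := |z| * Lr) ?_
      · exact measurable_const.mul ((hθ_meas n q).comp (measurable_const.prodMk measurable_id))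
      · intro θ
        rw [abs_mul]
        exact mul_le_mul_of_nonneg_left (hgε_bdd n q.1 _) (abs_nonneg z)
    have han_bdd : ∀ z, |an z| ≤ |z| * Lr := by
      intro z
      have h1 : ∀ θ ∈ Set.uIoc (0:ℝ) 1, ‖z * gε n q.1 (q.2 + εn n * z * θ)‖ ≤ |z| * Lr := by
        intro θ _
        rw [Real.norm_eq_abs, abs_mul]
        exact mul_le_mul_of_nonneg_left (hgε_bdd n q.1 _) (abs_nonneg z)
      have h2 := intervalIntegral.norm_integral_le_of_norm_le_const h1
      rw [Real.norm_eq_abs] at h2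
      simp only [sub_zero, abs_one, mul_one] at h2
      simp only [handef]
      exact h2
    have hA_meas : Measurable A :=
      hK_cont.measurable.mul ((Real.measurable_exp.comp han_meas).sub measurable_const)
    have hA_int : Integrable A volume := by
      refine Integrable.mono' (hKint.mul_const (Real.exp (R*Lr) + 1))
        hA_meas.aestronglyMeasurable (Filter.Eventually.of_forall fun z => ?_)
      rw [Real.norm_eq_abs, hAdef]
      by_cases hz : K z = 0
      · simp only [hz, zero_mul, abs_zero]
        positivity
      · have hzR := hKR z hz
        rw [abs_mul, abs_of_nonneg (hK_nonneg z)]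
        have hb : |Real.exp (an z) - 1| ≤ Real.exp (R*Lr) + 1 := by
          have h1 : |Real.exp (an z) - 1| ≤ |Real.exp (an z)| + |1| := abs_sub _ _
          have h2 : Real.exp (an z) ≤ Real.exp (R * Lr) := by
            apply Real.exp_le_exp.2
            calc an z ≤ |an z| := le_abs_self _
              _ ≤ |z| * Lr := han_bdd z
              _ ≤ R * Lr := mul_le_mul_of_nonneg_right hzR hLr0
          rw [abs_of_nonneg (Real.exp_pos _).le] at h1
          simp only [abs_one] at h1
          linarith
        exact mul_le_mul_of_nonneg_left hb (hK_nonneg z)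
    have hB_int : Integrable B volume := by
      apply Continuous.integrable_of_hasCompactSupport
      · exact hK_cont.mul ((Real.continuous_exp.comp
          (continuous_id.mul continuous_const)).sub continuous_const)
      · exact hK_supp.mul_right
    have hKD_meas : Measurable fun z => K z * D n q z := hK_cont.measurable.mul (hD_meas n q)
    have hKD_int : Integrable (fun z => K z * D n q z) volume := by
      refine Integrable.mono' (hKint.mul_const (2*Lr)) hKD_meas.aestronglyMeasurable
        (Filter.Eventually.of_forall fun z => ?_)
      rw [Real.norm_eq_abs, abs_mul, abs_of_nonneg (hK_nonneg z),
        abs_of_nonneg (hD_nonneg n q z)]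
      exact mul_le_mul_of_nonneg_left (hD_bdd n q z) (hK_nonneg z)
    have hAB : ∀ z : ℝ, ‖A z - B z‖ ≤ C₀ * (K z * D n q z) := by
      intro z
      have hfac : A z - B z = K z * (Real.exp (an z) - Real.exp (z * g q.1 q.2)) := by
        rw [hAdef, hBdef]; ring
      rw [hfac, Real.norm_eq_abs, abs_mul, abs_of_nonneg (hK_nonneg z)]
      by_cases hz : K z = 0
      · simp [hz]
      · have hzR := hKR z hz
        have hb1 : |an z| ≤ R * Lr :=
          le_trans (han_bdd z) (mul_le_mul_of_nonneg_right hzR hLr0)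
        have hb2 : |z * g q.1 q.2| ≤ R * Lr := by
          rw [abs_mul]
          exact mul_le_mul hzR (hg_bdd q.1 q.2) (abs_nonneg _) (le_trans (abs_nonneg z) hzR)
        have hexp := aux_exp_lip hb1 hb2
        have hdiff : an z - z * g q.1 q.2
            = ∫ θ in (0:ℝ)..1, (z * gε n q.1 (q.2 + εn n * z * θ) - z * g q.1 q.2) := by
          rw [intervalIntegral.integral_sub (hint_an z) intervalIntegrable_const]
          simp [handef]
        have habs : |an z - z * g q.1 q.2| ≤ |z| * D n q z := by
          rw [hdiff]
          have h1 := intervalIntegral.norm_integral_le_integral_norm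
            (f := fun θ => z * gε n q.1 (q.2 + εn n * z * θ) - z * g q.1 q.2)
            (μ := volume) zero_le_one
          rw [Real.norm_eq_abs] at h1
          refine le_trans h1 ?_
          have h2 : Set.EqOn (fun θ => ‖z * gε n q.1 (q.2 + εn n * z * θ) - z * g q.1 q.2‖)
              (fun θ => |z| * |gε n q.1 (q.2 + εn n * z * θ) - g q.1 q.2|) (Set.uIcc 0 1) := by
            intro θ _
            simp only [Real.norm_eq_abs]
            rw [← mul_sub, abs_mul]
          rw [intervalIntegral.integral_congr h2, intervalIntegral.integral_const_mul]
        calc K z * |Real.exp (an z) - Real.exp (z * g q.1 q.2)|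
            ≤ K z * (Real.exp (R * Lr) * |an z - z * g q.1 q.2|) :=
              mul_le_mul_of_nonneg_left hexp (hK_nonneg z)
          _ ≤ K z * (Real.exp (R * Lr) * (|z| * D n q z)) :=
              mul_le_mul_of_nonneg_left
                (mul_le_mul_of_nonneg_left habs (Real.exp_pos _).le) (hK_nonneg z)
          _ ≤ K z * (Real.exp (R * Lr) * (R * D n q z)) := by
              have h3 : |z| * D n q z ≤ R * D n q z :=
                mul_le_mul_of_nonneg_right hzR (hD_nonneg n q z)
              have h4 : Real.exp (R * Lr) * (|z| * D n q z)
                  ≤ Real.exp (R * Lr) * (R * D n q z) :=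
                mul_le_mul_of_nonneg_left h3 (Real.exp_pos _).le
              exact mul_le_mul_of_nonneg_left h4 (hK_nonneg z)
          _ = C₀ * (K z * D n q z) := by rw [hC₀def]; ring
    have hFA : Fn n q = |(∫ z, A z) - (∫ z, B z)| := rfl
    rw [hFA]
    calc |(∫ z, A z) - (∫ z, B z)| = |∫ z, (A z - B z)| := by
          rw [integral_sub hA_int hB_int]
      _ = ‖∫ z, (A z - B z)‖ := (Real.norm_eq_abs _).symm
      _ ≤ ∫ z, ‖A z - B z‖ := MeasureTheory.norm_integral_le_integral_norm _
      _ ≤ ∫ z, C₀ * (K z * D n q z) :=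
          integral_mono (hA_int.sub hB_int).norm (hKD_int.const_mul C₀)
            (fun z => hAB z)
      _ = C₀ * ∫ z, K z * D n q z := MeasureTheory.integral_const_mul _ _
  -- STEP 2 : conversion to lintegral
  have hKD_int : ∀ (n : ℕ) (q : ℝ × ℝ), Integrable (fun z => K z * D n q z) volume := by
    intro n q
    refine Integrable.mono' (hKint.mul_const (2*Lr))
      (hK_cont.measurable.mul (hD_meas n q)).aestronglyMeasurable
      (Filter.Eventually.of_forall fun z => ?_)
    rw [Real.norm_eq_abs, abs_mul, abs_of_nonneg (hK_nonneg z),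
      abs_of_nonneg (hD_nonneg n q z)]
    exact mul_le_mul_of_nonneg_left (hD_bdd n q z) (hK_nonneg z)
  have hIntOn : ∀ (n : ℕ) (q : ℝ × ℝ) (z : ℝ), Integrable
      (fun θ => |gε n q.1 (q.2 + εn n * z * θ) - g q.1 q.2|)
      (volume.restrict (Ioc (0:ℝ) 1)) := by
    intro n q z
    exact (hDint n q z).1
  have hconv : ∀ (n : ℕ) (q : ℝ × ℝ), ENNReal.ofReal (Fn n q) ≤
      ENNReal.ofReal C₀ * ∫⁻ z, ENNReal.ofReal (K z) *
        ∫⁻ θ in Ioc (0:ℝ) 1, ENNReal.ofReal |gε n q.1 (q.2 + εn n * z * θ) - g q.1 q.2| := by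
    intro n q
    have h1 : ENNReal.ofReal (Fn n q) ≤ ENNReal.ofReal (C₀ * ∫ z, K z * D n q z) :=
      ENNReal.ofReal_le_ofReal (hpoint n q)
    rw [ENNReal.ofReal_mul hC₀0.le] at h1
    refine le_trans h1 (mul_le_mul_right ?_ _)
    rw [MeasureTheory.ofReal_integral_eq_lintegral_ofReal (hKD_int n q)
      (Filter.Eventually.of_forall fun z => mul_nonneg (hK_nonneg z) (hD_nonneg n q z))]
    apply lintegral_mono
    intro z
    show ENNReal.ofReal (K z * D n q z) ≤ ENNReal.ofReal (K z) *
      ∫⁻ θ in Ioc (0:ℝ) 1, ENNReal.ofReal |gε n q.1 (q.2 + εn n * z * θ) - g q.1 q.2|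
    rw [ENNReal.ofReal_mul (hK_nonneg z)]
    apply mul_le_mul_right
    have hDset : D n q z = ∫ θ in Ioc (0:ℝ) 1,
        |gε n q.1 (q.2 + εn n * z * θ) - g q.1 q.2| := by
      simp only [hDdef]
      exact intervalIntegral.integral_of_le zero_le_one
    rw [hDset, MeasureTheory.ofReal_integral_eq_lintegral_ofReal (hIntOn n q z)
      (Filter.Eventually.of_forall fun θ => abs_nonneg _)]
  -- STEP 3 : compare with the triple lintegral
  set Ψ : ℕ → ℝ≥0∞ := fun n => ∫⁻ q in Q, ∫⁻ z, ENNReal.ofReal (K z) *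
      ∫⁻ θ in Ioc (0:ℝ) 1, ENNReal.ofReal |gε n q.1 (q.2 + εn n * z * θ) - g q.1 q.2|
    with hΨdef
  have hΦΨ : ∀ n, Φ n ≤ ENNReal.ofReal C₀ * Ψ n := by
    intro n
    calc Φ n ≤ ∫⁻ q in Q, ENNReal.ofReal C₀ * (∫⁻ z, ENNReal.ofReal (K z) *
          ∫⁻ θ in Ioc (0:ℝ) 1, ENNReal.ofReal |gε n q.1 (q.2 + εn n * z * θ) - g q.1 q.2|) :=
        lintegral_mono fun q => hconv n q
      _ = ENNReal.ofReal C₀ * Ψ n := lintegral_const_mul' _ _ ENNReal.ofReal_ne_top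
  -- STEP 4 : Tonelli
  set ν : Measure (ℝ × ℝ) := (volume : Measure ℝ).prod (volume.restrict (Ioc (0:ℝ) 1))
    with hνdef
  have hprod_meas : ∀ n : ℕ, Measurable fun x : (ℝ × ℝ) × (ℝ × ℝ) =>
      ENNReal.ofReal (K x.2.1) *
        ENNReal.ofReal |gε n x.1.1 (x.1.2 + εn n * x.2.1 * x.2.2) - g x.1.1 x.1.2| := by
    intro n
    have m2 : Measurable fun x : (ℝ × ℝ) × (ℝ × ℝ) => g x.1.1 x.1.2 :=
      hg_meas.comp measurable_fst
    exact (ENNReal.measurable_ofReal.comp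
        (hK_cont.measurable.comp measurable_snd.fst)).mul
      (ENNReal.measurable_ofReal.comp (((hshift_meas n).sub m2).abs))
  have hTon : ∀ n : ℕ, Ψ n = ∫⁻ z, ∫⁻ θ in Ioc (0:ℝ) 1, ENNReal.ofReal (K z) *
      ∫⁻ q in Q, ENNReal.ofReal |gε n q.1 (q.2 + εn n * z * θ) - g q.1 q.2| := by
    intro n
    have hsect : ∀ q : ℝ × ℝ, Measurable fun w : ℝ × ℝ =>
        ENNReal.ofReal (K w.1) *
          ENNReal.ofReal |gε n q.1 (q.2 + εn n * w.1 * w.2) - g q.1 q.2| := by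
      intro q
      exact (hprod_meas n).comp ((measurable_const.prodMk measurable_id) :
        Measurable fun w : ℝ × ℝ => ((q, w) : (ℝ × ℝ) × (ℝ × ℝ)))
    have step1 : ∀ q : ℝ × ℝ, (∫⁻ z, ENNReal.ofReal (K z) *
        ∫⁻ θ in Ioc (0:ℝ) 1, ENNReal.ofReal |gε n q.1 (q.2 + εn n * z * θ) - g q.1 q.2|)
        = ∫⁻ w, ENNReal.ofReal (K w.1) *
            ENNReal.ofReal |gε n q.1 (q.2 + εn n * w.1 * w.2) - g q.1 q.2| ∂ν := by
      intro q
      rw [hνdef, lintegral_prod _ (hsect q).aemeasurable]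
      refine lintegral_congr fun z => ?_
      exact (lintegral_const_mul' _ _ ENNReal.ofReal_ne_top).symm
    calc Ψ n = ∫⁻ q in Q, ∫⁻ w, (ENNReal.ofReal (K w.1) *
          ENNReal.ofReal |gε n q.1 (q.2 + εn n * w.1 * w.2) - g q.1 q.2|) ∂ν :=
        lintegral_congr fun q => step1 q
      _ = ∫⁻ w, (∫⁻ q in Q, ENNReal.ofReal (K w.1) *
          ENNReal.ofReal |gε n q.1 (q.2 + εn n * w.1 * w.2) - g q.1 q.2|) ∂ν :=
        lintegral_lintegral_swap (hprod_meas n).aemeasurable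
      _ = ∫⁻ z, ∫⁻ θ in Ioc (0:ℝ) 1, ∫⁻ q in Q, ENNReal.ofReal (K z) *
          ENNReal.ofReal |gε n q.1 (q.2 + εn n * z * θ) - g q.1 q.2| := by
        rw [hνdef]
        refine lintegral_prod _ ?_
        refine (Measurable.lintegral_prod_right (f := fun (w : ℝ × ℝ) (q : ℝ × ℝ) =>
          ENNReal.ofReal (K w.1) *
            ENNReal.ofReal |gε n q.1 (q.2 + εn n * w.1 * w.2) - g q.1 q.2|) ?_).aemeasurable
        exact (hprod_meas n).comp measurable_swap
      _ = ∫⁻ z, ∫⁻ θ in Ioc (0:ℝ) 1, ENNReal.ofReal (K z) *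
          ∫⁻ q in Q, ENNReal.ofReal |gε n q.1 (q.2 + εn n * z * θ) - g q.1 q.2| :=
        lintegral_congr fun z => lintegral_congr fun θ =>
          lintegral_const_mul' _ _ ENNReal.ofReal_ne_top
  -- auxiliary : the lintegral of K
  have hκlin : ∫⁻ z, ENNReal.ofReal (K z) = ENNReal.ofReal κ := by
    rw [hκdef, MeasureTheory.ofReal_integral_eq_lintegral_ofReal hKint
      (Filter.Eventually.of_forall hK_nonneg)]
  -- STEP 5 : main per-n estimate
  have hmain : ∀ η : ℝ, 0 < η → ∃ δ : ℝ, 0 < δ ∧ ∀ n, εn n * R ≤ min 1 δ →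
      Ψ n ≤ ENNReal.ofReal κ * (Δ n + ENNReal.ofReal η) := by
    intro η hη
    obtain ⟨δ, hδpos, hδ1, hδ⟩ := aux_translation g hg_meas Lr hg_bdd a b c d hη
    refine ⟨δ, hδpos, fun n hn => ?_⟩
    have key : ∀ z : ℝ, ∀ θ ∈ Ioc (0:ℝ) 1,
        ENNReal.ofReal (K z) * (∫⁻ q in Q,
          ENNReal.ofReal |gε n q.1 (q.2 + εn n * z * θ) - g q.1 q.2|)
        ≤ ENNReal.ofReal (K z) * (Δ n + ENNReal.ofReal η) := by
      intro z θ hθ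
      by_cases hz : K z = 0
      · simp [hz]
      apply mul_le_mul_right
      set h : ℝ := εn n * z * θ with hhdef
      have hzR := hKR z hz
      have hεnn := (hεn_pos n).le
      have hhb : |h| ≤ min 1 δ := by
        rw [hhdef, abs_mul, abs_mul, abs_of_nonneg hεnn]
        calc εn n * |z| * |θ| ≤ εn n * R * |θ| := by
              have := mul_le_mul_of_nonneg_left hzR hεnn
              exact mul_le_mul_of_nonneg_right this (abs_nonneg θ)
          _ ≤ εn n * R * 1 := by
              refine mul_le_mul_of_nonneg_left ?_ (by positivity)
              rw [abs_of_pos hθ.1]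
              exact hθ.2
          _ ≤ min 1 δ := by rw [mul_one]; exact hn
      have hh1 : |h| ≤ 1 := le_trans hhb (min_le_left _ _)
      have hhδ : |h| ≤ δ := le_trans hhb (min_le_right _ _)
      -- triangle split
      have hm1 : Measurable fun q : ℝ × ℝ =>
          ENNReal.ofReal |gε n q.1 (q.2 + h) - g q.1 (q.2 + h)| := by
        have hmap : Measurable fun q : ℝ × ℝ => ((q.1, q.2 + h) : ℝ × ℝ) :=
          measurable_fst.prodMk (measurable_snd.add_const h)
        exact (((hgε_meas n).comp hmap).sub (hg_meas.comp hmap)).abs.ennreal_ofReal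
      have htri : ∫⁻ q in Q, ENNReal.ofReal |gε n q.1 (q.2 + εn n * z * θ) - g q.1 q.2|
          ≤ (∫⁻ q in Q, ENNReal.ofReal |gε n q.1 (q.2 + h) - g q.1 (q.2 + h)|)
            + ∫⁻ q in Q, ENNReal.ofReal |g q.1 (q.2 + h) - g q.1 q.2| := by
        rw [← lintegral_add_left hm1]
        apply lintegral_mono
        intro q
        calc ENNReal.ofReal |gε n q.1 (q.2 + h) - g q.1 q.2|
            ≤ ENNReal.ofReal (|gε n q.1 (q.2 + h) - g q.1 (q.2 + h)|
                + |g q.1 (q.2 + h) - g q.1 q.2|) :=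
              ENNReal.ofReal_le_ofReal (abs_sub_le _ _ _)
          _ ≤ _ := ENNReal.ofReal_add_le
      refine le_trans htri (add_le_add ?_ ?_)
      · -- translation invariance term
        have hQsub : ∀ q ∈ Q, (q + (((0:ℝ), h) : ℝ × ℝ)) ∈ Q' := by
          intro q hq
          have h1 := hq.1
          have h2 := hq.2
          have hha := abs_le.1 hh1
          constructor
          · simpa using h1
          · simp only [Prod.snd_add]
            rw [hQdef] at hq
            exact ⟨by linarith [hq.2.1], by linarith [hq.2.2]⟩
        calc ∫⁻ q in Q, ENNReal.ofReal |gε n q.1 (q.2 + h) - g q.1 (q.2 + h)|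
            = ∫⁻ q in Q, (Q'.indicator fun q' => ENNReal.ofReal |u n q'|)
                (q + (((0:ℝ), h) : ℝ × ℝ)) := by
              refine setLIntegral_congr_fun hQm (fun q hq => ?_)
              rw [Set.indicator_of_mem (hQsub q hq), hudef]
              simp
          _ ≤ ∫⁻ q, (Q'.indicator fun q' => ENNReal.ofReal |u n q'|)
                (q + (((0:ℝ), h) : ℝ × ℝ)) := setLIntegral_le_lintegral _ _
          _ = ∫⁻ q, (Q'.indicator fun q' => ENNReal.ofReal |u n q'|) q :=
              lintegral_add_right_eq_self _ _
          _ = ∫⁻ q in Q', ENNReal.ofReal |u n q| :=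
              lintegral_indicator hQ'm _
          _ = Δ n := by rw [hΔdef]
      · -- translation continuity term
        have := hδ h hhδ
        rw [hQdef]
        exact this
    calc Ψ n = ∫⁻ z, ∫⁻ θ in Ioc (0:ℝ) 1, ENNReal.ofReal (K z) *
          ∫⁻ q in Q, ENNReal.ofReal |gε n q.1 (q.2 + εn n * z * θ) - g q.1 q.2| := hTon n
      _ ≤ ∫⁻ z, ∫⁻ θ in Ioc (0:ℝ) 1, ENNReal.ofReal (K z) * (Δ n + ENNReal.ofReal η) := by
          refine lintegral_mono fun z => ?_
          refine setLIntegral_mono' measurableSet_Ioc fun θ hθ => key z θ hθ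
      _ = ∫⁻ z, ENNReal.ofReal (K z) * (Δ n + ENNReal.ofReal η) := by
          refine lintegral_congr fun z => ?_
          rw [setLIntegral_const, Real.volume_Ioc]
          norm_num
      _ = (∫⁻ z, ENNReal.ofReal (K z)) * (Δ n + ENNReal.ofReal η) :=
          lintegral_mul_const' _ _ (by
            exact ENNReal.add_ne_top.2 ⟨hΔ_top n, ENNReal.ofReal_ne_top⟩)
      _ = ENNReal.ofReal κ * (Δ n + ENNReal.ofReal η) := by rw [hκlin]
  -- STEP 6 : Δ n is eventually small
  have hΔ0 : ∀ η : ℝ, 0 < η → ∀ᶠ n in Filter.atTop, Δ n ≤ ENNReal.ofReal η := by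
    intro η hη
    set Vr : ℝ := (volume Q').toReal with hVrdef
    have hVr0 : 0 ≤ Vr := ENNReal.toReal_nonneg
    set η₀ : ℝ := η / (2 * (Vr + 1)) with hη₀def
    have hη₀ : 0 < η₀ := by positivity
    set cp : ℝ := η₀ ^ (1 - p) with hcpdef
    have hcp0 : 0 < cp := Real.rpow_pos_of_pos hη₀ _
    have hp0 : (0:ℝ) ≤ p := le_trans zero_le_one hp
    have hup_int : ∀ n, Integrable (fun q => |u n q| ^ p) (volume.restrict Q') := by
      intro n
      refine Integrable.mono' (g := fun _ => (2*Lr) ^ p)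
        (MeasureTheory.integrableOn_const hQ'fin.ne)
        ((Real.continuous_rpow_const hp0).measurable.comp
          (hu_meas n).abs).aestronglyMeasurable
        (Filter.Eventually.of_forall fun q => ?_)
      rw [Real.norm_eq_abs, abs_of_nonneg (Real.rpow_nonneg (abs_nonneg _) _)]
      exact Real.rpow_le_rpow (abs_nonneg _) (hu_bdd n q) hp0
    have hev : ∀ᶠ n in Filter.atTop,
        (∫ q in Q', |u n q| ^ p ∂(volume : Measure (ℝ × ℝ))) < η / (2 * cp) := by
      have h0 := hLp a b (c-1) (d+1)
      have heq : (fun n => ∫ q in Icc a b ×ˢ Icc (c-1) (d+1),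
          |gε n q.1 q.2 - g q.1 q.2| ^ p ∂(volume : Measure (ℝ × ℝ)))
          = fun n => ∫ q in Q', |u n q| ^ p ∂(volume : Measure (ℝ × ℝ)) := by
        rw [hQ'def, hudef]
      rw [heq] at h0
      exact h0.eventually (gt_mem_nhds (by positivity))
    filter_upwards [hev] with n hn
    have hposint : 0 ≤ ∫ q in Q', |u n q| ^ p ∂(volume : Measure (ℝ × ℝ)) :=
      integral_nonneg fun q => Real.rpow_nonneg (abs_nonneg _) _
    calc Δ n ≤ ∫⁻ q in Q', (ENNReal.ofReal η₀
          + ENNReal.ofReal cp * ENNReal.ofReal (|u n q| ^ p)) := by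
          rw [hΔdef]
          refine lintegral_mono fun q => ?_
          have hsplit := aux_rpow_split (u := |u n q|) hη₀ hp (abs_nonneg _)
          calc ENNReal.ofReal |u n q|
              ≤ ENNReal.ofReal (η₀ + cp * |u n q| ^ p) := ENNReal.ofReal_le_ofReal hsplit
            _ ≤ _ := by
                rw [ENNReal.ofReal_add hη₀.le (by positivity),
                  ENNReal.ofReal_mul hcp0.le]
      _ = ENNReal.ofReal η₀ * volume Q'
          + ENNReal.ofReal cp * ∫⁻ q in Q', ENNReal.ofReal (|u n q| ^ p) := by
          rw [lintegral_add_left measurable_const,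
            lintegral_const_mul' _ _ ENNReal.ofReal_ne_top, setLIntegral_const]
      _ ≤ ENNReal.ofReal (η/2) + ENNReal.ofReal (η/2) := by
          refine add_le_add ?_ ?_
          · rw [← ENNReal.ofReal_toReal hQ'fin.ne, ← hVrdef,
              ← ENNReal.ofReal_mul hη₀.le]
            apply ENNReal.ofReal_le_ofReal
            rw [hη₀def, div_mul_eq_mul_div, div_le_div_iff₀ (by positivity) (by positivity)]
            nlinarith
          · rw [← MeasureTheory.ofReal_integral_eq_lintegral_ofReal (hup_int n)
              (Filter.Eventually.of_forall fun q => Real.rpow_nonneg (abs_nonneg _) _),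
              ← ENNReal.ofReal_mul hcp0.le]
            apply ENNReal.ofReal_le_ofReal
            have h2 : cp * (∫ q in Q', |u n q| ^ p ∂(volume : Measure (ℝ × ℝ)))
                ≤ cp * (η / (2 * cp)) := mul_le_mul_of_nonneg_left hn.le hcp0.le
            calc cp * (∫ q in Q', |u n q| ^ p ∂(volume : Measure (ℝ × ℝ)))
                ≤ cp * (η / (2 * cp)) := h2
              _ = η / 2 := by field_simp
      _ = ENNReal.ofReal η := by
          rw [← ENNReal.ofReal_add (by positivity) (by positivity)]
          norm_num
  -- STEP 7 : conclusion
  rw [ENNReal.tendsto_nhds_zero]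
  intro ε hε
  by_cases hεtop : ε = ⊤
  · exact Filter.Eventually.of_forall fun n => hεtop ▸ le_top
  have hεt : 0 < ε.toReal := ENNReal.toReal_pos hε.ne' hεtop
  set η : ℝ := ε.toReal / (2 * (C₀ * κ + 1)) with hηdef
  have hη : 0 < η := by positivity
  obtain ⟨δ, hδpos, hmainδ⟩ := hmain η hη
  have hev1 : ∀ᶠ n in Filter.atTop, εn n * R ≤ min 1 δ := by
    have hc : (0:ℝ) < min 1 δ / R := by positivity
    filter_upwards [hεn.eventually (gt_mem_nhds hc)] with n hn
    exact ((lt_div_iff₀ hRpos).1 hn).le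
  filter_upwards [hev1, hΔ0 η hη] with n h1 h2
  have hS : 0 ≤ C₀ * κ := mul_nonneg hC₀0.le hκ0
  calc Φ n ≤ ENNReal.ofReal C₀ * Ψ n := hΦΨ n
    _ ≤ ENNReal.ofReal C₀ * (ENNReal.ofReal κ * (Δ n + ENNReal.ofReal η)) :=
        mul_le_mul_right (hmainδ n h1) _
    _ ≤ ENNReal.ofReal C₀ * (ENNReal.ofReal κ * (ENNReal.ofReal η + ENNReal.ofReal η)) :=
        mul_le_mul_right (mul_le_mul_right (add_le_add_left h2 _) _) _
    _ = ENNReal.ofReal (C₀ * (κ * (η + η))) := by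
        rw [← ENNReal.ofReal_add hη.le hη.le, ← ENNReal.ofReal_mul hκ0,
          ← ENNReal.ofReal_mul hC₀0.le]
    _ ≤ ε := by
        rw [← ENNReal.ofReal_toReal hεtop]
        apply ENNReal.ofReal_le_ofReal
        have key : C₀ * (κ * (η + η)) = (C₀ * κ) * ε.toReal / (C₀ * κ + 1) := by
          rw [hηdef]; field_simp; ring
        rw [key, div_le_iff₀ (by positivity)]
        nlinarith
end
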